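/- For every number of stacks ℓ ≥ 1 and every odd number of tokens n, the second player wins Building Nim BN(n,ℓ); formally, ¬ BNwins (fun _ : Fin ℓ => 0) n whenever n is odd. -/

import Mathlib

instance : Std.Commutative (fun x y : ℕ => x ^^^ y) := ⟨Nat.xor_comm⟩
instance : Std.Associative (fun x y : ℕ => x ^^^ y) := ⟨Nat.xor_assoc⟩

/-- `BNwins s r` holds iff the player to move wins Building Nim from position `s`
(the stack heights) with `r` tokens remaining to be placed. When no tokens remain,
Nim play starts, and by Bouton's theorem the player to move wins iff the
Nim-sum (bitwise XOR) of the stack heights is nonzero. -/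
def BNwins {ℓ : ℕ} : (Fin ℓ → ℕ) → ℕ → Prop
  | s, 0 => Finset.univ.fold (fun x y : ℕ => x ^^^ y) 0 s ≠ 0
  | s, r + 1 => ∃ i : Fin ℓ, ¬ BNwins (Function.update s i (s i + 1)) r

lemma fold_xor_mod_two {ι : Type*} [DecidableEq ι] (t : Finset ι) (s : ι → ℕ) :
    t.fold (fun x y : ℕ => x ^^^ y) 0 s % 2 = (∑ i ∈ t, s i) % 2 := by
  induction t using Finset.induction with
  | empty => simp
  | insert a t h ih =>
    rw [Finset.fold_insert h, Finset.sum_insert h, Nat.xor_mod_two_eq,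
      Nat.add_mod, ih, ← Nat.add_mod]

lemma sum_update_succ {ℓ : ℕ} (s : Fin ℓ → ℕ) (i : Fin ℓ) :
    ∑ j, Function.update s i (s i + 1) j = (∑ j, s j) + 1 := by
  rw [Finset.sum_update_of_mem (Finset.mem_univ i)]
  have : ∑ j, s j = s i + ∑ j ∈ Finset.univ \ {i}, s j := by
    rw [← Finset.sum_insert (by simp)]
    congr 1
    simp [Finset.insert_eq]
  omega

lemma BNwins_iff_even {ℓ : ℕ} (hℓ : 1 ≤ ℓ) :
    ∀ (r : ℕ) (s : Fin ℓ → ℕ), Odd ((∑ i, s i) + r) → (BNwins s r ↔ Even r) := by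
  intro r
  induction r with
  | zero =>
    intro s hs
    simp only [BNwins, Nat.add_zero] at *
    constructor
    · intro _; exact Even.zero
    · intro _ h
      have := fold_xor_mod_two (Finset.univ : Finset (Fin ℓ)) s
      rw [h] at this
      rw [Nat.odd_iff] at hs
      omega
  | succ r ih =>
    intro s hs
    have hodd : ∀ i : Fin ℓ, Odd ((∑ j, Function.update s i (s i + 1) j) + r) := by
      intro i
      rw [sum_update_succ]
      have := hs
      rw [Nat.odd_iff] at this ⊢
      omega
    constructor
    · rintro ⟨i, hi⟩
      rw [ih _ (hodd i)] at hi
      rw [Nat.even_add_one]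
      exact hi
    · intro hr
      refine ⟨⟨0, hℓ⟩, ?_⟩
      rw [ih _ (hodd _)]
      rw [Nat.even_add_one] at hr
      exact hr

/-- If the number of tokens `n` is odd, the second player wins `BN(n, ℓ)`. -/
theorem second_player_wins_of_odd (ℓ n : ℕ) (hℓ : 1 ≤ ℓ) (hn : Odd n) :
    ¬ BNwins (fun _ : Fin ℓ => 0) n := by
  have h := BNwins_iff_even hℓ n (fun _ => 0) (by simpa using hn)
  rw [h, Nat.not_even_iff_odd]
  exact hn
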